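/- Let ι be a nonempty finite type with a distinguished element i₀, let H = EuclideanSpace ℂ (ι × Fin 2) and H' = EuclideanSpace ℂ ((ι × Fin 2) × Fin 2), and write δ_k for the standard basis vector of index k. For ψ ∈ EuclideanSpace ℂ ι and b ∈ Fin 2 write ψ ⊗ e_b for the vector of H with (ψ ⊗ e_b)(j, c) = ψ(j) if c = b and 0 otherwise. Let q ∈ [0, 1], let ψ₀, ψ₁ be unit vectors of EuclideanSpace ℂ ι, and let U be a linear isometric equivalence (unitary) of H with U δ_{(i₀,0)} = √q • (ψ₁ ⊗ e₁) + √(1 − q) • (ψ₀ ⊗ e₀). Let U ⊗ I and U⁻¹ ⊗ I denote the unitaries of H' acting as U (respectively U⁻¹) on each slice f(·, d) for d ∈ Fin 2 (i.e., ((U ⊗ I) f)(·, d) = U(f(·, d))), and let CNOT' be the unitary of H' induced by the index bijection ((j, c), d) ↦ ((j, c), c + d), with addition in Fin 2. Set V = (U⁻¹ ⊗ I) ∘ CNOT' ∘ (U ⊗ I). Then ⟪δ_{((i₀,0),1)}, V δ_{((i₀,0),0)}⟫ = q and ⟪δ_{((i₀,0),0)}, V δ_{((i₀,0),0)}⟫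 = 1 − q. -/

import Mathlib

open scoped InnerProductSpace

/-- `tensorE ψ b` is the vector `ψ ⊗ e_b` of `EuclideanSpace ℂ (ι × Fin 2)`:
`(ψ ⊗ e_b)(j, c) = ψ j` if `c = b`, and `0` otherwise. -/
noncomputable def tensorE {ι : Type*} [Fintype ι] (ψ : EuclideanSpace ℂ ι)
    (b : Fin 2) : EuclideanSpace ℂ (ι × Fin 2) :=
  WithLp.toLp 2 (fun p => if p.2 = b then ψ p.1 else 0)

/-- The slice `f(·, d)` of a vector `f` of `EuclideanSpace ℂ ((ι × Fin 2) × Fin 2)`. -/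
noncomputable def sliceE {ι : Type*} [Fintype ι]
    (f : EuclideanSpace ℂ ((ι × Fin 2) × Fin 2)) (d : Fin 2) :
    EuclideanSpace ℂ (ι × Fin 2) :=
  WithLp.toLp 2 (fun jc => f (jc, d))

lemma inner_tensorE_same {ι : Type*} [Fintype ι] (ψ φ : EuclideanSpace ℂ ι) (b : Fin 2) :
    ⟪tensorE ψ b, tensorE φ b⟫_ℂ = ⟪ψ, φ⟫_ℂ := by
  fin_cases b <;>
    simp [tensorE, PiLp.inner_apply, Fintype.sum_prod_type, Fin.sum_univ_two]

lemma inner_tensorE_ne {ι : Type*} [Fintype ι] (ψ φ : EuclideanSpace ℂ ι) (b c : Fin 2)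
    (h : b ≠ c) : ⟪tensorE ψ b, tensorE φ c⟫_ℂ = 0 := by
  fin_cases b <;> fin_cases c <;> simp_all <;>
    simp [tensorE, PiLp.inner_apply, Fintype.sum_prod_type, Fin.sum_univ_two]

/-- The key amplitude computation of the uncomputation trick: with
`U δ_{(i₀,0)} = √q • (ψ₁ ⊗ e₁) + √(1−q) • (ψ₀ ⊗ e₀)` and
`V = (U⁻¹ ⊗ I) ∘ CNOT' ∘ (U ⊗ I)`, one has
`⟪δ_{((i₀,0),1)}, V δ_{((i₀,0),0)}⟫ = q` and
`⟪δ_{((i₀,0),0)}, V δ_{((i₀,0),0)}⟫ = 1 − q`, independently of the garbage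
states `ψ₀, ψ₁`. -/
theorem uncomputation_trick_amplitudes {ι : Type*} [Fintype ι] [DecidableEq ι] [Nonempty ι]
    (i₀ : ι) (q : ℝ) (hq0 : 0 ≤ q) (hq1 : q ≤ 1)
    (ψ₀ ψ₁ : EuclideanSpace ℂ ι) (hψ₀ : ‖ψ₀‖ = 1) (hψ₁ : ‖ψ₁‖ = 1)
    (U : EuclideanSpace ℂ (ι × Fin 2) ≃ₗᵢ[ℂ] EuclideanSpace ℂ (ι × Fin 2))
    (hU : U (EuclideanSpace.single (i₀, (0 : Fin 2)) 1) =
      (Real.sqrt q : ℂ) • tensorE ψ₁ 1 + (Real.sqrt (1 - q) : ℂ) • tensorE ψ₀ 0)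
    (UI UInvI CNOT' : EuclideanSpace ℂ ((ι × Fin 2) × Fin 2) ≃ₗᵢ[ℂ]
      EuclideanSpace ℂ ((ι × Fin 2) × Fin 2))
    (hUI : ∀ (f : EuclideanSpace ℂ ((ι × Fin 2) × Fin 2)) (d : Fin 2),
      sliceE (UI f) d = U (sliceE f d))
    (hUInvI : ∀ (f : EuclideanSpace ℂ ((ι × Fin 2) × Fin 2)) (d : Fin 2),
      sliceE (UInvI f) d = U.symm (sliceE f d))
    (hCNOT : ∀ (f : EuclideanSpace ℂ ((ι × Fin 2) × Fin 2)) (j : ι) (c d : Fin 2),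
      CNOT' f ((j, c), d) = f ((j, c), c + d))
    (V : EuclideanSpace ℂ ((ι × Fin 2) × Fin 2) →
      EuclideanSpace ℂ ((ι × Fin 2) × Fin 2))
    (hV : ∀ f, V f = UInvI (CNOT' (UI f))) :
    ⟪EuclideanSpace.single ((i₀, (0 : Fin 2)), (1 : Fin 2)) (1 : ℂ),
        V (EuclideanSpace.single ((i₀, (0 : Fin 2)), (0 : Fin 2)) 1)⟫_ℂ = (q : ℂ) ∧
    ⟪EuclideanSpace.single ((i₀, (0 : Fin 2)), (0 : Fin 2)) (1 : ℂ),
        V (EuclideanSpace.single ((i₀, (0 : Fin 2)), (0 : Fin 2)) 1)⟫_ℂ =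
      ((1 - q : ℝ) : ℂ) := by
  set δ' : EuclideanSpace ℂ ((ι × Fin 2) × Fin 2) :=
    EuclideanSpace.single ((i₀, (0 : Fin 2)), (0 : Fin 2)) 1 with hδ'
  set δH : EuclideanSpace ℂ (ι × Fin 2) :=
    EuclideanSpace.single (i₀, (0 : Fin 2)) (1 : ℂ) with hδH
  set w : EuclideanSpace ℂ (ι × Fin 2) :=
    (Real.sqrt q : ℂ) • tensorE ψ₁ 1 + (Real.sqrt (1 - q) : ℂ) • tensorE ψ₀ 0 with hw
  have hs0 : sliceE δ' 0 = δH := by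
    ext jc
    simp [sliceE, hδ', hδH, EuclideanSpace.single_apply, Prod.ext_iff]
  have hs1 : sliceE δ' 1 = 0 := by
    ext jc
    simp [sliceE, hδ', EuclideanSpace.single_apply, Prod.ext_iff]
  have hg : ∀ (j : ι) (c d : Fin 2),
      CNOT' (UI δ') ((j, c), d) = (U (sliceE δ' (c + d))) (j, c) := by
    intro j c d
    rw [hCNOT]
    exact congrArg (fun v : EuclideanSpace ℂ (ι × Fin 2) => v (j, c)) (hUI δ' (c + d))
  have hg1 : sliceE (CNOT' (UI δ')) 1 = (Real.sqrt q : ℂ) • tensorE ψ₁ 1 := by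
    ext p
    obtain ⟨j, c⟩ := p
    have h0 : CNOT' (UI δ') ((j, 0), 1) = ((Real.sqrt q : ℂ) • tensorE ψ₁ 1) (j, 0) := by
      have h := hg j 0 1
      rw [show (0 : Fin 2) + 1 = 1 from rfl, hs1, map_zero] at h
      rw [h]
      simp [tensorE]
    have h1 : CNOT' (UI δ') ((j, 1), 1) = ((Real.sqrt q : ℂ) • tensorE ψ₁ 1) (j, 1) := by
      have h := hg j 1 1
      rw [show (1 : Fin 2) + 1 = 0 from rfl, hs0, hδH, hU, hw] at h
      rw [h]
      simp [tensorE]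
    fin_cases c
    · exact h0
    · exact h1
  have hg0 : sliceE (CNOT' (UI δ')) 0 = (Real.sqrt (1 - q) : ℂ) • tensorE ψ₀ 0 := by
    ext p
    obtain ⟨j, c⟩ := p
    have h0 : CNOT' (UI δ') ((j, 0), 0) = ((Real.sqrt (1 - q) : ℂ) • tensorE ψ₀ 0) (j, 0) := by
      have h := hg j 0 0
      rw [show (0 : Fin 2) + 0 = 0 from rfl, hs0, hδH, hU, hw] at h
      rw [h]
      simp [tensorE]
    have h1 : CNOT' (UI δ') ((j, 1), 0) = ((Real.sqrt (1 - q) : ℂ) • tensorE ψ₀ 0) (j, 1) := by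
      have h := hg j 1 0
      rw [show (1 : Fin 2) + 0 = 1 from rfl, hs1, map_zero] at h
      rw [h]
      simp [tensorE]
    fin_cases c
    · exact h0
    · exact h1
  have hsymm : ∀ x : EuclideanSpace ℂ (ι × Fin 2),
      (U.symm x) (i₀, (0 : Fin 2)) = ⟪w, x⟫_ℂ := by
    intro x
    have h1 : (U.symm x) (i₀, (0 : Fin 2)) = ⟪δH, U.symm x⟫_ℂ := by
      rw [hδH, EuclideanSpace.inner_single_left]
      simp
    rw [h1, ← LinearIsometryEquiv.inner_map_map U, hδH, hU, U.apply_symm_apply, hw]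
  have hVval : ∀ b : Fin 2,
      V δ' ((i₀, (0 : Fin 2)), b) = (U.symm (sliceE (CNOT' (UI δ')) b)) (i₀, (0 : Fin 2)) := by
    intro b
    rw [hV]
    exact congrArg (fun v : EuclideanSpace ℂ (ι × Fin 2) => v (i₀, (0 : Fin 2))) (hUInvI (CNOT' (UI δ')) b)
  have hip11 : ⟪ψ₁, ψ₁⟫_ℂ = 1 := by
    rw [inner_self_eq_norm_sq_to_K, hψ₁]; norm_num
  have hip00 : ⟪ψ₀, ψ₀⟫_ℂ = 1 := by
    rw [inner_self_eq_norm_sq_to_K, hψ₀]; norm_num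
  have hw1 : ⟪w, tensorE ψ₁ 1⟫_ℂ = (Real.sqrt q : ℂ) := by
    rw [hw, inner_add_left, inner_smul_left, inner_smul_left,
      inner_tensorE_same, inner_tensorE_ne _ _ 0 1 (by decide), hip11]
    simp [Complex.conj_ofReal]
  have hw0 : ⟪w, tensorE ψ₀ 0⟫_ℂ = (Real.sqrt (1 - q) : ℂ) := by
    rw [hw, inner_add_left, inner_smul_left, inner_smul_left,
      inner_tensorE_same, inner_tensorE_ne _ _ 1 0 (by decide), hip00]
    simp [Complex.conj_ofReal]
  constructor
  · rw [EuclideanSpace.inner_single_left]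
    rw [show V δ' ((i₀, (0 : Fin 2)), 1) = _ from hVval 1, hg1, map_smul]
    rw [show (((Real.sqrt q : ℂ) • U.symm (tensorE ψ₁ 1)) (i₀, (0 : Fin 2)))
        = (Real.sqrt q : ℂ) * (U.symm (tensorE ψ₁ 1)) (i₀, (0 : Fin 2)) from rfl]
    rw [hsymm, hw1]
    simp [← Complex.ofReal_mul, Real.mul_self_sqrt hq0]
  · rw [EuclideanSpace.inner_single_left]
    rw [show V δ' ((i₀, (0 : Fin 2)), 0) = _ from hVval 0, hg0, map_smul]
    rw [show (((Real.sqrt (1 - q) : ℂ) • U.symm (tensorE ψ₀ 0)) (i₀, (0 : Fin 2)))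
        = (Real.sqrt (1 - q) : ℂ) * (U.symm (tensorE ψ₀ 0)) (i₀, (0 : Fin 2)) from rfl]
    rw [hsymm, hw0]
    simp [← Complex.ofReal_mul, Real.mul_self_sqrt (by linarith : (0:ℝ) ≤ 1 - q)]
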